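/- Omori–Yau maximum principle on Euclidean space (supremum version): Let n ≥ 1 and let u : ℝⁿ → ℝ be a C² function with u* = sup u < +∞. Then there exists a sequence of points (x_k), k ∈ ℕ (k ≥ 1), in ℝⁿ such that for each k: (i) u(x_k) > u* − 1/k, (ii) ‖∇u(x_k)‖ < 1/k, and (iii) Δu(x_k) < 1/k. -/

import Mathlib

/-- The Euclidean Laplacian of `u : ℝⁿ → ℝ`, defined as the trace of the Hessian,
i.e. the sum of the second derivatives in the directions of the standard
orthonormal basis. -/
noncomputable def euclideanLaplacian {n : ℕ} (u : EuclideanSpace ℝ (Fin n) → ℝ)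
    (x : EuclideanSpace ℝ (Fin n)) : ℝ :=
  ∑ i : Fin n,
    iteratedFDeriv ℝ 2 u x ![EuclideanSpace.single i 1, EuclideanSpace.single i 1]

open Filter Set Real Topology RealInnerProductSpace

set_option maxHeartbeats 1000000
set_option synthInstance.maxHeartbeats 400000

section helpers

/-- Second derivative test at a local max. -/
lemma OY.second_deriv_test_max {h : ℝ → ℝ} {A : ℝ}
    (hdiff : ∀ t, DifferentiableAt ℝ h t)
    (hA : HasDerivAt (deriv h) A 0) (hmax : IsLocalMax h 0) : A ≤ 0 := by
  by_contra hpos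
  push_neg at hpos
  have h0 : deriv h 0 = 0 := hmax.deriv_eq_zero
  have hslope : Tendsto (slope (deriv h) 0) (𝓝[≠] 0) (𝓝 A) :=
    hasDerivAt_iff_tendsto_slope.1 hA
  have hev : ∀ᶠ t in 𝓝[≠] (0:ℝ), 0 < slope (deriv h) 0 t :=
    (tendsto_order.1 hslope).1 0 hpos
  rw [eventually_nhdsWithin_iff] at hev
  have hcomb : ∀ᶠ t in 𝓝 (0:ℝ), (t ∈ ({(0:ℝ)}ᶜ : Set ℝ) → 0 < slope (deriv h) 0 t)
      ∧ h t ≤ h 0 := hev.and hmax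
  obtain ⟨δ, hδ, hδP⟩ := Metric.eventually_nhds_iff.1 hcomb
  have hδ4 : dist (δ/2) (0:ℝ) < δ := by
    rw [Real.dist_eq, sub_zero, abs_of_pos (by linarith)]; linarith
  have hmono : StrictMonoOn h (Set.Icc 0 (δ/2)) := by
    apply strictMonoOn_of_deriv_pos (convex_Icc _ _)
    · exact fun t _ => (hdiff t).continuousAt.continuousWithinAt
    · intro t ht
      rw [interior_Icc] at ht
      have htδ : dist t 0 < δ := by
        rw [Real.dist_eq, sub_zero, abs_of_pos ht.1]; linarith [ht.2]
      have hst := (hδP htδ).1 (by simpa using ne_of_gt ht.1)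
      have hsl : slope (deriv h) 0 t = deriv h t / t := by
        rw [slope_def_field, h0, sub_zero, sub_zero]
      rw [hsl] at hst
      have := mul_pos hst ht.1
      rwa [div_mul_cancel₀ _ (ne_of_gt ht.1)] at this
  have hlt : h 0 < h (δ/2) :=
    hmono (Set.left_mem_Icc.2 (by linarith)) (Set.right_mem_Icc.2 (by linarith))
      (by linarith)
  have hle : h (δ/2) ≤ h 0 := (hδP hδ4).2
  linarith

variable {n : ℕ}

lemma OY.line_hasDerivAt (x v : EuclideanSpace ℝ (Fin n)) (t : ℝ) :
    HasDerivAt (fun s : ℝ => x + s • v) v t := by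
  simpa using ((hasDerivAt_id t).smul_const v).const_add x

lemma OY.slice_hasDerivAt {u : EuclideanSpace ℝ (Fin n) → ℝ} (hu : Differentiable ℝ u)
    (x v : EuclideanSpace ℝ (Fin n)) (t : ℝ) :
    HasDerivAt (fun s : ℝ => u (x + s • v)) (fderiv ℝ u (x + t • v) v) t :=
  (hu (x + t • v)).hasFDerivAt.comp_hasDerivAt t (OY.line_hasDerivAt x v t)

lemma OY.slice_deriv2 {u : EuclideanSpace ℝ (Fin n) → ℝ} (hu : ContDiff ℝ 2 u)
    (x v : EuclideanSpace ℝ (Fin n)) :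
    HasDerivAt (fun t : ℝ => fderiv ℝ u (x + t • v) v)
      (iteratedFDeriv ℝ 2 u x ![v, v]) 0 := by
  have hF : ContDiff ℝ 1 (fderiv ℝ u) := hu.fderiv_right (le_refl 2)
  have hFd : DifferentiableAt ℝ (fderiv ℝ u) x :=
    (hF.differentiable one_ne_zero) x
  have h0 : x + (0:ℝ) • v = x := by simp
  have h1 : HasDerivAt (fun t : ℝ => fderiv ℝ u (x + t • v))
      (fderiv ℝ (fderiv ℝ u) x v) 0 := by
    have hFd' : HasFDerivAt (fderiv ℝ u) (fderiv ℝ (fderiv ℝ u) x) (x + (0:ℝ) • v) := by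
      rw [h0]; exact hFd.hasFDerivAt
    exact hFd'.comp_hasDerivAt 0 (OY.line_hasDerivAt x v 0)
  have h2 := h1.clm_apply (hasDerivAt_const (0:ℝ) v)
  rw [iteratedFDeriv_two_apply]
  simpa using h2

noncomputable def OY.phi (x : EuclideanSpace ℝ (Fin n)) : ℝ := Real.log (1 + ‖x‖ ^ 2)

lemma OY.q_pos (x : EuclideanSpace ℝ (Fin n)) : (0:ℝ) < 1 + ‖x‖ ^ 2 := by positivity

lemma OY.phi_nonneg (x : EuclideanSpace ℝ (Fin n)) : 0 ≤ OY.phi x :=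
  Real.log_nonneg (by nlinarith [sq_nonneg ‖x‖])

lemma OY.phi_continuous : Continuous (OY.phi (n := n)) := by
  apply Continuous.log
  · exact continuous_const.add (continuous_norm.pow 2)
  · exact fun x => ne_of_gt (OY.q_pos x)

lemma OY.phi_hasFDerivAt (x : EuclideanSpace ℝ (Fin n)) :
    HasFDerivAt OY.phi ((1 + ‖x‖ ^ 2)⁻¹ • (2 • (innerSL ℝ x))) x := by
  have h1 : HasFDerivAt (fun y : EuclideanSpace ℝ (Fin n) => 1 + ‖y‖ ^ 2)
      (2 • (innerSL ℝ x)) x := by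
    simpa using ((hasFDerivAt_id x).norm_sq).const_add 1
  exact h1.log (ne_of_gt (OY.q_pos x))

lemma OY.phi_fderiv_norm (x : EuclideanSpace ℝ (Fin n)) :
    ‖(1 + ‖x‖ ^ 2)⁻¹ • (2 • (innerSL ℝ x))‖ ≤ 1 := by
  apply ContinuousLinearMap.opNorm_le_bound _ zero_le_one
  intro z
  have hq : (0:ℝ) < 1 + ‖x‖ ^ 2 := by positivity
  have h1 : ((1 + ‖x‖ ^ 2)⁻¹ • (2 • (innerSL ℝ x))) z
      = (1 + ‖x‖ ^ 2)⁻¹ * (2 * ⟪x, z⟫) := by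
    simp [two_smul]; ring
  rw [h1, Real.norm_eq_abs, abs_mul, abs_mul,
    abs_of_pos (show (0:ℝ) < (1 + ‖x‖ ^ 2)⁻¹ by positivity), abs_two]
  rw [inv_mul_le_iff₀ hq]
  have h2 := abs_real_inner_le_norm x z
  have h3 : 2 * ‖x‖ ≤ 1 + ‖x‖ ^ 2 := by nlinarith [sq_nonneg (1 - ‖x‖)]
  have h4 := mul_le_mul_of_nonneg_right h3 (norm_nonneg z)
  nlinarith [norm_nonneg z, norm_nonneg x, abs_nonneg (⟪x, z⟫)]

lemma OY.norm_gradient (u : EuclideanSpace ℝ (Fin n) → ℝ) (x : EuclideanSpace ℝ (Fin n)) :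
    ‖gradient u x‖ = ‖fderiv ℝ u x‖ := by
  rw [gradient]
  exact LinearIsometryEquiv.norm_map _ _

lemma OY.slice_phi_hasDeriv (a c t : ℝ) (hc : 0 < c) :
    HasDerivAt (fun s : ℝ => Real.log (c + (a + s) ^ 2))
      (2 * (a + t) / (c + (a + t) ^ 2)) t := by
  have h1 : HasDerivAt (fun s : ℝ => a + s) 1 t := (hasDerivAt_id t).const_add a
  have h2 : HasDerivAt (fun s : ℝ => (a + s) ^ 2) (2 * (a + t)) t := by
    simpa using h1.fun_pow 2
  have hp : HasDerivAt (fun s : ℝ => c + (a + s) ^ 2) (2 * (a + t)) t := h2.const_add c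
  have hne : c + (a + t) ^ 2 ≠ 0 := by positivity
  simpa using hp.log hne

lemma OY.slice_phi_deriv2 (a c : ℝ) (hc : 1 ≤ c) :
    ∃ B : ℝ, HasDerivAt (fun t : ℝ => 2 * (a + t) / (c + (a + t) ^ 2)) B 0 ∧ B ≤ 2 := by
  have hc0 : (0:ℝ) < c := by linarith
  have h1 : HasDerivAt (fun t : ℝ => a + t) 1 0 := (hasDerivAt_id 0).const_add a
  have hnum : HasDerivAt (fun t : ℝ => 2 * (a + t)) 2 0 := by
    simpa using h1.const_mul 2
  have hden : HasDerivAt (fun t : ℝ => c + (a + t) ^ 2) (2 * (a + 0)) 0 := by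
    have := h1.pow 2
    simpa using (by simpa using h1.fun_pow 2 : HasDerivAt (fun s : ℝ => (a + s) ^ 2) (2 * (a + 0)) 0).const_add c
  have hne : c + (a + 0) ^ 2 ≠ 0 := by positivity
  refine ⟨_, hnum.div hden hne, ?_⟩
  have ha0 : a + 0 = a := add_zero a
  rw [ha0] at *
  have hd : (0:ℝ) < c + a ^ 2 := by positivity
  rw [div_le_iff₀ (by positivity)]
  nlinarith [sq_nonneg a, sq_nonneg (c + a ^ 2), sq_nonneg (c + a ^ 2 - 1)]

end helpers

lemma OY.key {n : ℕ} (u : EuclideanSpace ℝ (Fin n) → ℝ) (hu : ContDiff ℝ 2 u)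
    (hbd : BddAbove (Set.range u)) {δ : ℝ} (hδ : 0 < δ) :
    ∃ x : EuclideanSpace ℝ (Fin n),
      sSup (Set.range u) - δ < u x ∧ ‖gradient u x‖ < δ ∧ euclideanLaplacian u x < δ := by
  set S := sSup (Set.range u) with hS
  obtain ⟨_, ⟨y, rfl⟩, hy⟩ := exists_lt_of_lt_csSup (Set.range_nonempty u)
    (show S - δ/2 < S by linarith)
  have hφy := OY.phi_nonneg y
  have hden : (0:ℝ) < 1 + n + OY.phi y := by positivity
  set ε : ℝ := δ / (2 * (1 + n + OY.phi y)) with hε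
  have hεpos : 0 < ε := by positivity
  set g : EuclideanSpace ℝ (Fin n) → ℝ := fun z => u z - ε * OY.phi z with hg
  have hgc : Continuous g :=
    (hu.continuous).sub (continuous_const.mul OY.phi_continuous)
  have hub : ∀ z, u z ≤ S := fun z => le_csSup hbd (Set.mem_range_self z)
  have htends : Tendsto g (cocompact (EuclideanSpace ℝ (Fin n))) atBot := by
    have hφt : Tendsto (OY.phi (n := n)) (cocompact _) atTop := by
      have hn : Tendsto (fun z : EuclideanSpace ℝ (Fin n) => ‖z‖) (cocompact _) atTop :=
        tendsto_norm_cocompact_atTop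
      have hl : Tendsto (fun r : ℝ => Real.log (1 + r ^ 2)) atTop atTop :=
        Real.tendsto_log_atTop.comp
          (tendsto_atTop_add_const_left _ 1 (tendsto_pow_atTop two_ne_zero))
      exact hl.comp hn
    have h1 : Tendsto (fun z : EuclideanSpace ℝ (Fin n) => S - ε * OY.phi z)
        (cocompact _) atBot := by
      simp only [sub_eq_add_neg]
      exact tendsto_atBot_add_const_left _ S
        (tendsto_neg_atTop_atBot.comp (hφt.const_mul_atTop hεpos))
    exact tendsto_atBot_mono (fun z => by
      have := hub z; simp only [hg]; linarith) h1
  obtain ⟨x₀, hx₀⟩ := hgc.exists_forall_ge htends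
  have hmax : IsLocalMax g x₀ := Filter.Eventually.of_forall hx₀
  refine ⟨x₀, ?_, ?_, ?_⟩
  · -- value bound
    have h1 := hx₀ y
    have hφx₀ := OY.phi_nonneg x₀
    have h2 : ε * OY.phi y < δ / 2 := by
      rw [hε, div_mul_eq_mul_div, div_lt_iff₀ (by positivity)]
      nlinarith
    simp only [hg] at h1
    have h5 := mul_nonneg (le_of_lt hεpos) hφx₀
    linarith
  · -- gradient bound
    have hder0 : fderiv ℝ g x₀ = 0 := hmax.fderiv_eq_zero
    have hgd : HasFDerivAt g
        (fderiv ℝ u x₀ - ε • ((1 + ‖x₀‖ ^ 2)⁻¹ • (2 • (innerSL ℝ x₀)))) x₀ :=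
      ((hu.differentiable (by norm_num) x₀).hasFDerivAt).sub
        ((OY.phi_hasFDerivAt x₀).const_mul ε)
    have := hgd.fderiv
    rw [hder0] at this
    have heq : fderiv ℝ u x₀ = ε • ((1 + ‖x₀‖ ^ 2)⁻¹ • (2 • (innerSL ℝ x₀))) := by
      exact sub_eq_zero.1 this.symm
    rw [OY.norm_gradient, heq, norm_smul]
    have h3 : ‖ε‖ = ε := by rw [Real.norm_eq_abs, abs_of_pos hεpos]
    rw [h3]
    have h4 := OY.phi_fderiv_norm x₀
    have hεδ : ε < δ := by
      rw [hε, div_lt_iff₀ (by positivity)]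
      nlinarith
    calc ε * ‖(1 + ‖x₀‖ ^ 2)⁻¹ • (2 • (innerSL ℝ x₀))‖ ≤ ε * 1 :=
          mul_le_mul_of_nonneg_left h4 (le_of_lt hεpos)
      _ = ε := mul_one ε
      _ < δ := hεδ
  · -- Laplacian bound
    have hAi : ∀ i : Fin n,
        iteratedFDeriv ℝ 2 u x₀ ![EuclideanSpace.single i 1, EuclideanSpace.single i 1]
          ≤ 2 * ε := by
      intro i
      set e : EuclideanSpace ℝ (Fin n) := EuclideanSpace.single i 1 with he
      set a : ℝ := x₀ i with ha
      set c : ℝ := 1 + ‖x₀‖ ^ 2 - a ^ 2 with hc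
      have hslice : ∀ t : ℝ, OY.phi (x₀ + t • e) = Real.log (c + (a + t) ^ 2) := by
        intro t
        have hinner : ⟪x₀, t • e⟫ = t * a := by
          rw [real_inner_smul_right, he]
          have : ⟪x₀, EuclideanSpace.single i (1:ℝ)⟫ = a := by
            rw [EuclideanSpace.inner_single_right]; simp [ha]
          rw [this]
        have hnorm : ‖x₀ + t • e‖ ^ 2 = ‖x₀‖ ^ 2 + 2 * (t * a) + t ^ 2 := by
          rw [norm_add_sq_real, hinner, norm_smul, he, EuclideanSpace.norm_single]
          simp [mul_pow]
        rw [OY.phi]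
        congr 1
        rw [hnorm, hc]
        ring
      have hc1 : 1 ≤ c := by
        have : |a| ≤ ‖x₀‖ := by
          have h := abs_real_inner_le_norm x₀ (EuclideanSpace.single i (1:ℝ))
          rw [EuclideanSpace.norm_single] at h
          have h2 : ⟪x₀, EuclideanSpace.single i (1:ℝ)⟫ = a := by
            rw [EuclideanSpace.inner_single_right]; simp [ha]
          simpa [h2] using h
        have := sq_le_sq' (neg_abs_le a) (le_abs_self a)
        have h3 : a ^ 2 ≤ ‖x₀‖ ^ 2 := by nlinarith [abs_nonneg a]
        rw [hc]; linarith
      have hc0 : (0:ℝ) < c := by linarith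
      obtain ⟨B, hB, hB2⟩ := OY.slice_phi_deriv2 a c hc1
      set hslg : ℝ → ℝ := fun t => g (x₀ + t • e) with hslgdef
      have hudiff : Differentiable ℝ u := hu.differentiable (by norm_num)
      have hsg_eq : hslg = fun t => u (x₀ + t • e) - ε * Real.log (c + (a + t) ^ 2) := by
        funext t; simp only [hslgdef, hg, hslice t]
      have hsgdiff : ∀ t, DifferentiableAt ℝ hslg t := by
        intro t
        rw [hsg_eq]
        exact ((OY.slice_hasDerivAt hudiff x₀ e t).sub
          ((OY.slice_phi_hasDeriv a c t hc0).const_mul ε)).differentiableAt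
      have hsgderiv : deriv hslg = fun t =>
          fderiv ℝ u (x₀ + t • e) e - ε * (2 * (a + t) / (c + (a + t) ^ 2)) := by
        funext t
        rw [hsg_eq]
        exact ((OY.slice_hasDerivAt hudiff x₀ e t).sub
          ((OY.slice_phi_hasDeriv a c t hc0).const_mul ε)).deriv
      have hA : HasDerivAt (deriv hslg)
          (iteratedFDeriv ℝ 2 u x₀ ![e, e] - ε * B) 0 := by
        rw [hsgderiv]
        exact (OY.slice_deriv2 hu x₀ e).sub (hB.const_mul ε)
      have hlocmax : IsLocalMax hslg 0 := by
        apply Filter.Eventually.of_forall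
        intro t
        simp only [hslgdef]
        have := hx₀ (x₀ + t • e)
        simpa using this
      have := OY.second_deriv_test_max hsgdiff hA hlocmax
      have hεB : ε * B ≤ ε * 2 := mul_le_mul_of_nonneg_left hB2 (le_of_lt hεpos)
      simp only [he] at this ⊢
      linarith
    have hsum : euclideanLaplacian u x₀ ≤ (n : ℝ) * (2 * ε) := by
      rw [euclideanLaplacian]
      calc (∑ i : Fin n, iteratedFDeriv ℝ 2 u x₀
            ![EuclideanSpace.single i 1, EuclideanSpace.single i 1])
          ≤ ∑ _i : Fin n, 2 * ε := Finset.sum_le_sum (fun i _ => hAi i)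
        _ = (n : ℝ) * (2 * ε) := by
            rw [Finset.sum_const, Finset.card_univ, Fintype.card_fin]
            simp [nsmul_eq_mul]
    have hfin : (n : ℝ) * (2 * ε) < δ := by
      have he2 : (n : ℝ) * (2 * ε) = ((n : ℝ) * δ) / (1 + n + OY.phi y) := by
        rw [hε]; field_simp
      rw [he2, div_lt_iff₀ hden]
      have hn0 : (0:ℝ) ≤ n := Nat.cast_nonneg n
      nlinarith
    linarith

/-- Omori–Yau maximum principle on Euclidean space (supremum version): if
`u : ℝⁿ → ℝ` is `C²` and bounded above, with supremum `u*`, then there is a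
sequence of points `x k` with `u (x k) > u* - 1/k`, `‖∇u (x k)‖ < 1/k` and
`Δu (x k) < 1/k` for every `k ≥ 1`. -/
theorem omori_yau_sup {n : ℕ} (hn : 1 ≤ n)
    (u : EuclideanSpace ℝ (Fin n) → ℝ) (hu : ContDiff ℝ 2 u)
    (hbd : BddAbove (Set.range u)) :
    ∃ x : ℕ → EuclideanSpace ℝ (Fin n), ∀ k : ℕ, 1 ≤ k →
      (sSup (Set.range u) - 1 / (k : ℝ) < u (x k)) ∧
      ‖gradient u (x k)‖ < 1 / (k : ℝ) ∧
      euclideanLaplacian u (x k) < 1 / (k : ℝ) := by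
  have hpos : ∀ k : ℕ, 1 ≤ k → (0:ℝ) < 1 / (k : ℝ) := by
    intro k hk
    have : (0:ℝ) < (k : ℝ) := by exact_mod_cast hk
    positivity
  refine ⟨fun k => if h : 1 ≤ k then (OY.key u hu hbd (hpos k h)).choose else 0, ?_⟩
  intro k hk
  simp only [dif_pos hk]
  exact (OY.key u hu hbd (hpos k hk)).choose_spec
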